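/- Let T ≥ 1, let ε ∈ [0,1], let j* ∈ {1,…,T}, and let A ∈ ℝ^{T×T} be a row-stochastic matrix that is ε-sink-collapsed to j*. Then there exists a matrix A₀ ∈ ℝ^{T×T} of rank at most 1 such that ‖A − A₀‖₂ ≤ ε·√(2T), where ‖·‖₂ denotes the operator (spectral) norm; i.e., A is within ε·√(2T) in operator norm of a rank-one matrix. -/

import Mathlib

open Finset

/-- The operator (spectral) norm of a real matrix: its norm as a linear map between
Euclidean spaces. -/
noncomputable def opNorm {m n : ℕ} (A : Matrix (Fin m) (Fin n) ℝ) : ℝ :=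
  ‖LinearMap.toContinuousLinearMap (Matrix.toEuclideanLin A)‖

/-- The operator norm is bounded by the Frobenius norm. -/
lemma opNorm_le_sqrt_frobenius {m n : ℕ} (A : Matrix (Fin m) (Fin n) ℝ) :
    opNorm A ≤ Real.sqrt (∑ i, ∑ j, (A i j) ^ 2) := by
  apply ContinuousLinearMap.opNorm_le_bound _ (Real.sqrt_nonneg _)
  intro x
  have hx : ‖x‖ = Real.sqrt (∑ j, (x j) ^ 2) := by
    rw [EuclideanSpace.norm_eq]
    congr 1
    exact Finset.sum_congr rfl fun j _ => by rw [Real.norm_eq_abs, sq_abs]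
  have hAx : ‖(LinearMap.toContinuousLinearMap (Matrix.toEuclideanLin A)) x‖
      = Real.sqrt (∑ i, (∑ j, A i j * x j) ^ 2) := by
    rw [EuclideanSpace.norm_eq]
    congr 1
    refine Finset.sum_congr rfl fun i _ => ?_
    rw [Real.norm_eq_abs, sq_abs]
    simp [Matrix.toEuclideanLin_apply, Matrix.mulVec, dotProduct]
  rw [hAx, hx, ← Real.sqrt_mul (by positivity)]
  apply Real.sqrt_le_sqrt
  rw [Finset.sum_mul]
  refine Finset.sum_le_sum fun i _ => ?_
  exact Finset.sum_mul_sq_le_sq_mul_sq _ _ _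

/-- A row-stochastic matrix that is ε-sink-collapsed to a column `j*`
(with `ε ∈ [0,1]`) is within `ε·√(2T)`, in operator (spectral) norm, of a matrix of
rank at most one. -/
theorem sink_collapsed_near_rank_one
    (T : ℕ) (hT : 1 ≤ T) (ε : ℝ) (hε0 : 0 ≤ ε) (hε1 : ε ≤ 1)
    (jstar : Fin T) (A : Matrix (Fin T) (Fin T) ℝ)
    (hA_nonneg : ∀ i j, 0 ≤ A i j) (hA_rows : ∀ i, ∑ j, A i j = 1)
    (hcollapse : ∀ i, ∑ j ∈ Finset.univ.erase jstar, A i j ≤ ε) :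
    ∃ A₀ : Matrix (Fin T) (Fin T) ℝ,
      A₀.rank ≤ 1 ∧ opNorm (A - A₀) ≤ ε * Real.sqrt (2 * T) := by
  set B : Matrix (Fin T) (Fin 1) ℝ := Matrix.of fun _ _ => (1 : ℝ)
  set C : Matrix (Fin 1) (Fin T) ℝ := Matrix.of fun _ j => if j = jstar then (1:ℝ) else 0
  refine ⟨B * C, ?_, ?_⟩
  · calc (B * C).rank ≤ C.rank := Matrix.rank_mul_le_right B C
      _ ≤ Fintype.card (Fin 1) := Matrix.rank_le_card_height C
      _ = 1 := by simp
  · have hBC : ∀ i j, (B * C) i j = if j = jstar then (1:ℝ) else 0 := by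
      intro i j
      simp [Matrix.mul_apply, B, C]
    -- entrywise bound on the Frobenius norm
    have hrow : ∀ i, ∑ j, ((A - B * C) i j) ^ 2 ≤ 2 * ε ^ 2 := by
      intro i
      have hr : ∑ j ∈ Finset.univ.erase jstar, A i j ≤ ε := hcollapse i
      have hrnn : 0 ≤ ∑ j ∈ Finset.univ.erase jstar, A i j :=
        Finset.sum_nonneg fun j _ => hA_nonneg i j
      have hsplit : ∑ j, ((A - B * C) i j) ^ 2
          = ((A - B * C) i jstar) ^ 2
            + ∑ j ∈ Finset.univ.erase jstar, ((A - B * C) i j) ^ 2 := by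
        rw [← Finset.add_sum_erase _ _ (Finset.mem_univ jstar)]
      have hjstar : (A - B * C) i jstar = -(∑ j ∈ Finset.univ.erase jstar, A i j) := by
        have := hA_rows i
        rw [← Finset.add_sum_erase _ _ (Finset.mem_univ jstar)] at this
        have hv : (B * C) i jstar = 1 := by rw [hBC]; simp
        rw [Matrix.sub_apply, hv]
        linarith
      have hoff : ∀ j ∈ Finset.univ.erase jstar, ((A - B * C) i j) ^ 2 ≤ ε * A i j := by
        intro j hj
        have hne : j ≠ jstar := Finset.ne_of_mem_erase hj
        have hval : (A - B * C) i j = A i j := by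
          simp [Matrix.sub_apply, hBC, hne]
        rw [hval, sq]
        apply mul_le_mul_of_nonneg_right _ (hA_nonneg i j)
        calc A i j ≤ ∑ k ∈ Finset.univ.erase jstar, A i k :=
              Finset.single_le_sum (fun k _ => hA_nonneg i k) hj
          _ ≤ ε := hr
      calc ∑ j, ((A - B * C) i j) ^ 2
          = ((A - B * C) i jstar) ^ 2
            + ∑ j ∈ Finset.univ.erase jstar, ((A - B * C) i j) ^ 2 := hsplit
        _ ≤ ε ^ 2 + ∑ j ∈ Finset.univ.erase jstar, ε * A i j := by
            apply add_le_add
            · rw [hjstar, neg_sq]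
              exact pow_le_pow_left₀ hrnn hr 2
            · exact Finset.sum_le_sum hoff
        _ = ε ^ 2 + ε * ∑ j ∈ Finset.univ.erase jstar, A i j := by rw [Finset.mul_sum]
        _ ≤ ε ^ 2 + ε * ε := by
            apply add_le_add_right
            exact mul_le_mul_of_nonneg_left hr hε0
        _ = 2 * ε ^ 2 := by ring
    calc opNorm (A - B * C) ≤ Real.sqrt (∑ i, ∑ j, ((A - B * C) i j) ^ 2) :=
          opNorm_le_sqrt_frobenius _
      _ ≤ Real.sqrt (∑ _i : Fin T, 2 * ε ^ 2) := by
          apply Real.sqrt_le_sqrt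
          exact Finset.sum_le_sum fun i _ => hrow i
      _ = ε * Real.sqrt (2 * T) := by
          rw [Finset.sum_const, Finset.card_univ, Fintype.card_fin, nsmul_eq_mul]
          rw [show (T : ℝ) * (2 * ε ^ 2) = ε ^ 2 * (2 * T) by ring,
            Real.sqrt_mul (by positivity), Real.sqrt_sq hε0]
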